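/- Let $K(m_0,m_1)=\tfrac12\tilde K(m_0,m_1,-m_1,-m_0)$ where $\tilde K(m_0,\dots,m_3)=4\sum_{i=0}^{3}\sum_{j=1}^{3}\psi^{(-2)}\big(\tfrac{m_i-m_{i+j}+j}{4}\big)$ (indices mod 4), $\psi^{(-2)}(z)=\int_0^z\log\Gamma$. Then for $k=0,1$ and $(m_0,m_1)$ near the origin, $\frac{\partial K}{\partial m_k}(m_0,m_1)=\log X_k(m_0,m_1,-m_1,-m_0)-\log X_{3-k}(m_0,m_1,-m_1,-m_0)$, where $X_k(m_0,\dots,m_3)=\prod_{j=1}^{3}\Gamma\big(\tfrac{m_k-m_{k+j}+j}{4}\big)$. -/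

import Mathlib

open Real

/-- The antiderivative of `log ∘ Γ`: `ψ⁽⁻²⁾(z) = ∫₀ᶻ log Γ(x) dx`. -/
noncomputable def psiM2 (z : ℝ) : ℝ := ∫ t in (0:ℝ)..z, Real.log (Real.Gamma t)

/-- The antisymmetric extension `(m₀, m₁, -m₁, -m₀)` for `n = 3`, indices in `ZMod 4`. -/
def mfun (a b : ℝ) : ZMod 4 → ℝ := fun i =>
  if i = 0 then a else if i = 1 then b else if i = 2 then -b else -a

/-- `K̃(m₀,…,m₃) = 4 ∑_{i=0}^3 ∑_{j=1}^3 ψ⁽⁻²⁾((mᵢ - m_{i+j} + j)/4)`, indices mod 4. -/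
noncomputable def Ktilde4 (m : ZMod 4 → ℝ) : ℝ :=
  4 * ∑ i ∈ Finset.range 4, ∑ j ∈ Finset.range 3,
    psiM2 ((m (i : ZMod 4) - m ((i : ZMod 4) + (j + 1 : ℕ)) + ((j : ℝ) + 1)) / 4)

/-- `X_k(m₀,…,m₃) = ∏_{j=1}^3 Γ((m_k - m_{k+j} + j)/4)`, indices mod 4. -/
noncomputable def Xm (m : ZMod 4 → ℝ) (k : ZMod 4) : ℝ :=
  ∏ j ∈ Finset.range 3, Real.Gamma ((m k - m (k + (j + 1 : ℕ)) + ((j : ℝ) + 1)) / 4)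

section aux
open MeasureTheory Set

lemma integrableOn_log_Ioc {z : ℝ} (hz : 0 < z) :
    IntegrableOn Real.log (Set.Ioc 0 z) := by
  have hg : IntegrableOn (fun t : ℝ => 2 * t ^ (-(1/2) : ℝ) + (|Real.log z| + 1))
      (Set.Ioc 0 z) := by
    apply Integrable.add
    · exact ((intervalIntegral.intervalIntegrable_rpow' (by norm_num)
        : IntervalIntegrable (fun x : ℝ => x ^ (-(1/2):ℝ)) volume 0 z).const_mul 2
        |> (intervalIntegrable_iff_integrableOn_Ioc_of_le hz.le).mp)
    · exact (integrableOn_const_iff (by finiteness)).mpr (Or.inr measure_Ioc_lt_top)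
  refine hg.mono' Real.measurable_log.aestronglyMeasurable ?_
  rw [ae_restrict_iff' measurableSet_Ioc]
  filter_upwards with t ht
  have ht0 := ht.1
  have hrp : (0:ℝ) < t ^ (-(1/2):ℝ) := Real.rpow_pos_of_pos ht0 _
  have key : |Real.log t| ≤ 2 * t ^ (-(1/2):ℝ) + |Real.log z| := by
    rcases le_or_gt t 1 with h1 | h1
    · have hlt : Real.log t ≤ 0 := Real.log_nonpos ht0.le h1
      rw [abs_of_nonpos hlt]
      have h2 : Real.log (t ^ (-(1/2):ℝ)) = (-(1/2)) * Real.log t := Real.log_rpow ht0 _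
      have h3 : Real.log (t ^ (-(1/2):ℝ)) ≤ t ^ (-(1/2):ℝ) - 1 :=
        Real.log_le_sub_one_of_pos hrp
      nlinarith [abs_nonneg (Real.log z)]
    · have hlt : 0 ≤ Real.log t := Real.log_nonneg h1.le
      rw [abs_of_nonneg hlt]
      have := Real.log_le_log ht0 ht.2
      have := le_abs_self (Real.log z)
      nlinarith
  calc ‖Real.log t‖ = |Real.log t| := rfl
    _ ≤ 2 * t ^ (-(1/2):ℝ) + (|Real.log z| + 1) := by linarith

lemma continuousAt_logGamma {z : ℝ} (hz : 0 < z) :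
    ContinuousAt (fun t => Real.log (Real.Gamma t)) z := by
  have h1 : ContinuousAt Real.Gamma z :=
    (Real.differentiableAt_Gamma fun m =>
      (lt_of_le_of_lt (neg_nonpos.mpr (Nat.cast_nonneg m)) hz).ne').continuousAt
  exact (Real.continuousAt_log (Real.Gamma_pos_of_pos hz).ne').comp h1

lemma intervalIntegrable_logGamma {z : ℝ} (hz : 0 < z) :
    IntervalIntegrable (fun t => Real.log (Real.Gamma t)) volume 0 z := by
  rw [intervalIntegrable_iff_integrableOn_Ioc_of_le hz.le]
  have h1 : IntegrableOn (fun t => Real.log (Real.Gamma (t + 1)) - Real.log t)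
      (Set.Ioc 0 z) := by
    apply Integrable.sub
    · refine ((ContinuousOn.integrableOn_Icc ?_).mono_set Set.Ioc_subset_Icc_self)
      intro t ht
      have hc : ContinuousAt (fun s : ℝ => s + 1) t := by fun_prop
      exact (ContinuousAt.comp (g := fun u => Real.log (Real.Gamma u))
        (f := fun s : ℝ => s + 1)
        (continuousAt_logGamma (by linarith [ht.1] : (0:ℝ) < t + 1)) hc).continuousWithinAt
    · exact integrableOn_log_Ioc hz
  refine h1.congr_fun (fun t ht => ?_) measurableSet_Ioc
  have ht0 : (0:ℝ) < t := ht.1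
  beta_reduce
  rw [Real.Gamma_add_one ht0.ne', Real.log_mul ht0.ne' (Real.Gamma_pos_of_pos ht0).ne']
  ring

lemma hasDerivAt_psiM2 {z : ℝ} (hz : 0 < z) :
    HasDerivAt psiM2 (Real.log (Real.Gamma z)) z := by
  refine intervalIntegral.integral_hasDerivAt_right (intervalIntegrable_logGamma hz)
    ⟨Set.Ioi 0, Ioi_mem_nhds hz, ?_⟩ (continuousAt_logGamma hz)
  refine ContinuousOn.aestronglyMeasurable (fun t ht => ?_) measurableSet_Ioi
  exact (continuousAt_logGamma ht).continuousWithinAt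

lemma hd_aux {u : ℝ → ℝ} {u' x : ℝ} (hu : HasDerivAt u u' x) (h : 0 < u x) :
    HasDerivAt (fun t => psiM2 (u t)) (Real.log (Real.Gamma (u x)) * u') x :=
  HasDerivAt.comp x (hasDerivAt_psiM2 h) hu

end aux


/-- For `K(m₀,m₁) = ½ K̃(m₀,m₁,-m₁,-m₀)` one has
`∂K/∂m_k = log X_k(m₀,m₁,-m₁,-m₀) - log X_{3-k}(m₀,m₁,-m₁,-m₀)` for `k = 0, 1`. -/
theorem stmt12 (a b : ℝ)
    (hpos : ∀ i : ZMod 4, ∀ j ∈ Finset.range 3,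
      0 < (mfun a b i - mfun a b (i + (j + 1 : ℕ)) + ((j : ℝ) + 1)) / 4) :
    HasDerivAt (fun t => (1/2) * Ktilde4 (mfun t b))
      (Real.log (Xm (mfun a b) 0) - Real.log (Xm (mfun a b) 3)) a ∧
    HasDerivAt (fun t => (1/2) * Ktilde4 (mfun a t))
      (Real.log (Xm (mfun a b) 1) - Real.log (Xm (mfun a b) 2)) b := by
  -- positivity facts
  have p1 : 0 < (a - b + 1)/4 := by
    have h := hpos 0 0 (by norm_num)
    simp (config := { decide := true }) only [mfun] at h; norm_num at h; linarith
  have p2 : 0 < (a + b + 2)/4 := by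
    have h := hpos 0 1 (by norm_num)
    simp (config := { decide := true }) only [mfun] at h; norm_num at h; linarith
  have p3 : 0 < (a + a + 3)/4 := by
    have h := hpos 0 2 (by norm_num)
    simp (config := { decide := true }) only [mfun] at h; norm_num at h; linarith
  have p4 : 0 < (b + b + 1)/4 := by
    have h := hpos 1 0 (by norm_num)
    simp (config := { decide := true }) only [mfun] at h; norm_num at h; linarith
  have p5 : 0 < (b + a + 2)/4 := by
    have h := hpos 1 1 (by norm_num)
    simp (config := { decide := true }) only [mfun] at h; norm_num at h; linarith
  have p6 : 0 < (b - a + 3)/4 := by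
    have h := hpos 1 2 (by norm_num)
    simp (config := { decide := true }) only [mfun] at h; norm_num at h; linarith
  have p7 : 0 < (-b + a + 1)/4 := by
    have h := hpos 2 0 (by norm_num)
    simp (config := { decide := true }) only [mfun] at h; norm_num at h; linarith
  have p8 : 0 < (-b - a + 2)/4 := by
    have h := hpos 2 1 (by norm_num)
    simp (config := { decide := true }) only [mfun] at h; norm_num at h; linarith
  have p9 : 0 < (-b - b + 3)/4 := by
    have h := hpos 2 2 (by norm_num)
    simp (config := { decide := true }) only [mfun] at h; norm_num at h; linarith
  have p10 : 0 < (-a - a + 1)/4 := by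
    have h := hpos 3 0 (by norm_num)
    simp (config := { decide := true }) only [mfun] at h; norm_num at h; linarith
  have p11 : 0 < (-a - b + 2)/4 := by
    have h := hpos 3 1 (by norm_num)
    simp (config := { decide := true }) only [mfun] at h; norm_num at h; linarith
  have p12 : 0 < (-a + b + 3)/4 := by
    have h := hpos 3 2 (by norm_num)
    simp (config := { decide := true }) only [mfun] at h; norm_num at h; linarith
  have γ1 := (Real.Gamma_pos_of_pos p1).ne'
  have γ2 := (Real.Gamma_pos_of_pos p2).ne'
  have γ3 := (Real.Gamma_pos_of_pos p3).ne'
  have γ4 := (Real.Gamma_pos_of_pos p4).ne'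
  have γ5 := (Real.Gamma_pos_of_pos p5).ne'
  have γ6 := (Real.Gamma_pos_of_pos p6).ne'
  have γ7 := (Real.Gamma_pos_of_pos p7).ne'
  have γ8 := (Real.Gamma_pos_of_pos p8).ne'
  have γ9 := (Real.Gamma_pos_of_pos p9).ne'
  have γ10 := (Real.Gamma_pos_of_pos p10).ne'
  have γ11 := (Real.Gamma_pos_of_pos p11).ne'
  have γ12 := (Real.Gamma_pos_of_pos p12).ne'
  have X0eq : Xm (mfun a b) 0 = Real.Gamma ((a - b + 1)/4) * Real.Gamma ((a + b + 2)/4)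
      * Real.Gamma ((a + a + 3)/4) := by
    simp (config := { decide := true }) only [Xm, mfun, Finset.prod_range_succ,
      Finset.prod_range_zero]
    norm_num
  have X3eq : Xm (mfun a b) 3 = Real.Gamma ((-a - a + 1)/4) * Real.Gamma ((-a - b + 2)/4)
      * Real.Gamma ((-a + b + 3)/4) := by
    simp (config := { decide := true }) only [Xm, mfun, Finset.prod_range_succ,
      Finset.prod_range_zero]
    norm_num
  have X1eq : Xm (mfun a b) 1 = Real.Gamma ((b + b + 1)/4) * Real.Gamma ((b + a + 2)/4)
      * Real.Gamma ((b - a + 3)/4) := by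
    simp (config := { decide := true }) only [Xm, mfun, Finset.prod_range_succ,
      Finset.prod_range_zero]
    norm_num
  have X2eq : Xm (mfun a b) 2 = Real.Gamma ((-b + a + 1)/4) * Real.Gamma ((-b - a + 2)/4)
      * Real.Gamma ((-b - b + 3)/4) := by
    simp (config := { decide := true }) only [Xm, mfun, Finset.prod_range_succ,
      Finset.prod_range_zero]
    norm_num
  constructor
  · have hfun : (fun t : ℝ => (1/2) * Ktilde4 (mfun t b)) = fun t =>
        2 * (psiM2 ((t - b + 1)/4) + psiM2 ((t + b + 2)/4) + psiM2 ((t + t + 3)/4)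
          + psiM2 ((b + b + 1)/4) + psiM2 ((b + t + 2)/4) + psiM2 ((b - t + 3)/4)
          + psiM2 ((-b + t + 1)/4) + psiM2 ((-b - t + 2)/4) + psiM2 ((-b - b + 3)/4)
          + psiM2 ((-t - t + 1)/4) + psiM2 ((-t - b + 2)/4) + psiM2 ((-t + b + 3)/4)) := by
      funext t
      simp (config := { decide := true }) only [Ktilde4, mfun, Finset.sum_range_succ,
        Finset.sum_range_zero]
      norm_num
      ring
    have g1 : HasDerivAt (fun t : ℝ => (t - b + 1)/4) (1/4) a :=
      (((hasDerivAt_id a).sub_const b).add_const 1).div_const 4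
    have g2 : HasDerivAt (fun t : ℝ => (t + b + 2)/4) (1/4) a :=
      (((hasDerivAt_id a).add_const b).add_const 2).div_const 4
    have g3 : HasDerivAt (fun t : ℝ => (t + t + 3)/4) ((1+1)/4) a :=
      (((hasDerivAt_id a).add (hasDerivAt_id a)).add_const 3).div_const 4
    have g5 : HasDerivAt (fun t : ℝ => (b + t + 2)/4) (1/4) a :=
      (((hasDerivAt_id a).const_add b).add_const 2).div_const 4
    have g6 : HasDerivAt (fun t : ℝ => (b - t + 3)/4) (-1/4) a :=
      (((hasDerivAt_id a).const_sub b).add_const 3).div_const 4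
    have g7 : HasDerivAt (fun t : ℝ => (-b + t + 1)/4) (1/4) a :=
      (((hasDerivAt_id a).const_add (-b)).add_const 1).div_const 4
    have g8 : HasDerivAt (fun t : ℝ => (-b - t + 2)/4) (-1/4) a :=
      (((hasDerivAt_id a).const_sub (-b)).add_const 2).div_const 4
    have g10 : HasDerivAt (fun t : ℝ => (-t - t + 1)/4) ((-1 + -1)/4) a :=
      ((((hasDerivAt_id a).neg).add ((hasDerivAt_id a).neg)).add_const 1).div_const 4
    have g11 : HasDerivAt (fun t : ℝ => (-t - b + 2)/4) (-1/4) a :=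
      ((((hasDerivAt_id a).neg).sub_const b).add_const 2).div_const 4
    have g12 : HasDerivAt (fun t : ℝ => (-t + b + 3)/4) (-1/4) a :=
      ((((hasDerivAt_id a).neg).add_const b).add_const 3).div_const 4
    have H := (hd_aux g1 p1).add (hd_aux g2 p2) |>.add (hd_aux g3 p3)
      |>.add (hasDerivAt_const a (psiM2 ((b + b + 1)/4))) |>.add (hd_aux g5 p5)
      |>.add (hd_aux g6 p6) |>.add (hd_aux g7 p7) |>.add (hd_aux g8 p8)
      |>.add (hasDerivAt_const a (psiM2 ((-b - b + 3)/4))) |>.add (hd_aux g10 p10)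
      |>.add (hd_aux g11 p11) |>.add (hd_aux g12 p12) |>.const_mul 2
    rw [hfun]
    convert H using 1
    · rfl
    · rfl
    · rfl
    rw [X0eq, X3eq, Real.log_mul (mul_ne_zero γ1 γ2) γ3, Real.log_mul γ1 γ2,
      Real.log_mul (mul_ne_zero γ10 γ11) γ12, Real.log_mul γ10 γ11]
    ring_nf
  · have hfun : (fun t : ℝ => (1/2) * Ktilde4 (mfun a t)) = fun t =>
        2 * (psiM2 ((a - t + 1)/4) + psiM2 ((a + t + 2)/4) + psiM2 ((a + a + 3)/4)
          + psiM2 ((t + t + 1)/4) + psiM2 ((t + a + 2)/4) + psiM2 ((t - a + 3)/4)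
          + psiM2 ((-t + a + 1)/4) + psiM2 ((-t - a + 2)/4) + psiM2 ((-t - t + 3)/4)
          + psiM2 ((-a - a + 1)/4) + psiM2 ((-a - t + 2)/4) + psiM2 ((-a + t + 3)/4)) := by
      funext t
      simp (config := { decide := true }) only [Ktilde4, mfun, Finset.sum_range_succ,
        Finset.sum_range_zero]
      norm_num
      ring
    have q1 : 0 < (a - b + 1)/4 := p1
    have q2 : 0 < (a + b + 2)/4 := p2
    have q4 : 0 < (b + b + 1)/4 := p4
    have q5 : 0 < (b + a + 2)/4 := p5
    have q6 : 0 < (b - a + 3)/4 := p6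
    have q7 : 0 < (-b + a + 1)/4 := p7
    have q8 : 0 < (-b - a + 2)/4 := p8
    have q9 : 0 < (-b - b + 3)/4 := p9
    have q11 : 0 < (-a - b + 2)/4 := p11
    have q12 : 0 < (-a + b + 3)/4 := p12
    have g1 : HasDerivAt (fun t : ℝ => (a - t + 1)/4) (-1/4) b :=
      (((hasDerivAt_id b).const_sub a).add_const 1).div_const 4
    have g2 : HasDerivAt (fun t : ℝ => (a + t + 2)/4) (1/4) b :=
      (((hasDerivAt_id b).const_add a).add_const 2).div_const 4
    have g4 : HasDerivAt (fun t : ℝ => (t + t + 1)/4) ((1+1)/4) b :=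
      (((hasDerivAt_id b).add (hasDerivAt_id b)).add_const 1).div_const 4
    have g5 : HasDerivAt (fun t : ℝ => (t + a + 2)/4) (1/4) b :=
      (((hasDerivAt_id b).add_const a).add_const 2).div_const 4
    have g6 : HasDerivAt (fun t : ℝ => (t - a + 3)/4) (1/4) b :=
      (((hasDerivAt_id b).sub_const a).add_const 3).div_const 4
    have g7 : HasDerivAt (fun t : ℝ => (-t + a + 1)/4) (-1/4) b :=
      ((((hasDerivAt_id b).neg).add_const a).add_const 1).div_const 4
    have g8 : HasDerivAt (fun t : ℝ => (-t - a + 2)/4) (-1/4) b :=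
      ((((hasDerivAt_id b).neg).sub_const a).add_const 2).div_const 4
    have g9 : HasDerivAt (fun t : ℝ => (-t - t + 3)/4) ((-1 + -1)/4) b :=
      ((((hasDerivAt_id b).neg).add ((hasDerivAt_id b).neg)).add_const 3).div_const 4
    have g11 : HasDerivAt (fun t : ℝ => (-a - t + 2)/4) (-1/4) b :=
      (((hasDerivAt_id b).const_sub (-a)).add_const 2).div_const 4
    have g12 : HasDerivAt (fun t : ℝ => (-a + t + 3)/4) (1/4) b :=
      (((hasDerivAt_id b).const_add (-a)).add_const 3).div_const 4
    have H := (hd_aux g1 q1).add (hd_aux g2 q2)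
      |>.add (hasDerivAt_const b (psiM2 ((a + a + 3)/4))) |>.add (hd_aux g4 q4)
      |>.add (hd_aux g5 q5) |>.add (hd_aux g6 q6) |>.add (hd_aux g7 q7)
      |>.add (hd_aux g8 q8) |>.add (hd_aux g9 q9)
      |>.add (hasDerivAt_const b (psiM2 ((-a - a + 1)/4)))
      |>.add (hd_aux g11 q11) |>.add (hd_aux g12 q12) |>.const_mul 2
    rw [hfun]
    convert H using 1
    · rfl
    · rfl
    · rfl
    rw [X1eq, X2eq, Real.log_mul (mul_ne_zero γ4 γ5) γ6, Real.log_mul γ4 γ5,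
      Real.log_mul (mul_ne_zero γ7 γ8) γ9, Real.log_mul γ7 γ8]
    ring_nf
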